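/- Let n > 2k, k ≥ t+3, t ≥ 2, and let F ⊆ C([n],k) be a maximal t-intersecting family with τ_t(F) = t+2 such that the family T_t(F) of minimum t-covers satisfies τ_t(T_t(F)) = t+1. If there exist a minimum t-cover U of T_t(F) (of size t+1) and F ∈ F with |U ∩ F| ≤ t−2, then |T_t(F)| ≤ 3(k−t+1) < (t+2)(k−t)+1. -/

import Mathlib

open Finset

def Intersecting (t : ℕ) (𝓕 : Finset (Finset ℕ)) : Prop :=
  ∀ A ∈ 𝓕, ∀ B ∈ 𝓕, t ≤ (A ∩ B).card

def IsCover (n t : ℕ) (𝓕 : Finset (Finset ℕ)) (S : Finset ℕ) : Prop :=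
  S ⊆ Finset.range n ∧ ∀ A ∈ 𝓕, t ≤ (S ∩ A).card

noncomputable def tau (n t : ℕ) (𝓕 : Finset (Finset ℕ)) : ℕ :=
  sInf {m | ∃ S, IsCover n t 𝓕 S ∧ S.card = m}

open Classical in
noncomputable def minCovers (n t : ℕ) (𝓕 : Finset (Finset ℕ)) : Finset (Finset ℕ) :=
  ((Finset.range n).powerset).filter
    (fun S => (∀ A ∈ 𝓕, t ≤ (S ∩ A).card) ∧ S.card = tau n t 𝓕)

def MaximalIntersecting (n k t : ℕ) (𝓕 : Finset (Finset ℕ)) : Prop :=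
  𝓕 ⊆ (Finset.range n).powersetCard k ∧ Intersecting t 𝓕 ∧
    ∀ 𝓖 : Finset (Finset ℕ), 𝓖 ⊆ (Finset.range n).powersetCard k →
      Intersecting t 𝓖 → 𝓕 ⊆ 𝓖 → 𝓖 = 𝓕


lemma star_bound (B : Finset ℕ) (S : Finset (Finset ℕ)) (x : ℕ)
    (hS : S ⊆ B.powersetCard 2) (hx : ∀ e ∈ S, x ∈ e) :
    S.card ≤ B.card - 1 := by
  rcases S.eq_empty_or_nonempty with rfl | ⟨e0, he0⟩
  · simp
  have hxB : x ∈ B := by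
    have h0 := mem_powersetCard.mp (hS he0)
    exact h0.1 (hx e0 he0)
  have hinj : Set.InjOn (fun e => Finset.erase e x) S := by
    intro e he f hf hef
    have hef' : e.erase x = f.erase x := hef
    have : insert x (e.erase x) = insert x (f.erase x) := by rw [hef']
    rwa [insert_erase (hx e he), insert_erase (hx f hf)] at this
  calc S.card = (S.image (fun e => e.erase x)).card := (card_image_of_injOn hinj).symm
    _ ≤ ((B.erase x).powersetCard 1).card := by
        apply card_le_card
        intro e' he'
        obtain ⟨e, he, rfl⟩ := mem_image.mp he'
        obtain ⟨heB, hec⟩ := mem_powersetCard.mp (hS he)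
        refine mem_powersetCard.mpr ⟨?_, ?_⟩
        · intro y hy
          rcases mem_erase.mp hy with ⟨hyx, hye⟩
          exact mem_erase.mpr ⟨hyx, heB hye⟩
        · rw [card_erase_of_mem (hx e he), hec]
    _ = B.card - 1 := by
        rw [card_powersetCard, Nat.choose_one_right, card_erase_of_mem hxB]

lemma pair_mem_cases {e : Finset ℕ} {a b u : ℕ} (h : e = ({a, b} : Finset ℕ)) (hu : u ∈ e) :
    u = a ∨ u = b := by
  subst h
  rcases mem_insert.mp hu with h | h
  · exact Or.inl h
  · exact Or.inr (mem_singleton.mp h)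

lemma intersecting_bound (B : Finset ℕ) (S : Finset (Finset ℕ))
    (hB : 4 ≤ B.card) (hS : S ⊆ B.powersetCard 2)
    (hint : ∀ e ∈ S, ∀ f ∈ S, (e ∩ f).Nonempty) :
    S.card ≤ B.card - 1 := by
  rcases S.eq_empty_or_nonempty with rfl | ⟨e0, he0⟩
  · simp
  obtain ⟨x, y, hxy, he0xy⟩ := Finset.card_eq_two.mp (mem_powersetCard.mp (hS he0)).2
  by_cases hx : ∀ e ∈ S, x ∈ e
  · exact star_bound B S x hS hx
  by_cases hy : ∀ e ∈ S, y ∈ e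
  · exact star_bound B S y hS hy
  push_neg at hx hy
  obtain ⟨e1, he1, he1x⟩ := hx
  obtain ⟨e2, he2, he2y⟩ := hy
  have hye1 : y ∈ e1 := by
    obtain ⟨u, hu⟩ := hint e1 he1 e0 he0
    rcases mem_inter.mp hu with ⟨hu1, hu0⟩
    rcases pair_mem_cases he0xy hu0 with rfl | rfl
    · exact absurd hu1 he1x
    · exact hu1
  have hxe2 : x ∈ e2 := by
    obtain ⟨u, hu⟩ := hint e2 he2 e0 he0
    rcases mem_inter.mp hu with ⟨hu1, hu0⟩
    rcases pair_mem_cases he0xy hu0 with rfl | rfl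
    · exact hu1
    · exact absurd hu1 he2y
  obtain ⟨z, hze1, hzy⟩ : ∃ z ∈ e1, z ≠ y := by
    obtain ⟨a, b, hab, habe⟩ := Finset.card_eq_two.mp (mem_powersetCard.mp (hS he1)).2
    by_cases hay : a = y
    · exact ⟨b, by simp [habe], by rintro rfl; exact hab hay⟩
    · exact ⟨a, by simp [habe], hay⟩
  have hzx : z ≠ x := by rintro rfl; exact he1x hze1
  have he1eq : e1 = ({y, z} : Finset ℕ) := by
    symm
    apply Finset.eq_of_subset_of_card_le
    · intro u hu
      rcases mem_insert.mp hu with rfl | hu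
      · exact hye1
      · rwa [mem_singleton.mp hu]
    · rw [(mem_powersetCard.mp (hS he1)).2, card_insert_of_notMem (by simp [Ne.symm hzy]),
        card_singleton]
  have hze2 : z ∈ e2 := by
    obtain ⟨u, hu⟩ := hint e2 he2 e1 he1
    rcases mem_inter.mp hu with ⟨hu2, hu1⟩
    rcases pair_mem_cases he1eq hu1 with rfl | rfl
    · exact absurd hu2 he2y
    · exact hu2
  have he2eq : e2 = ({x, z} : Finset ℕ) := by
    symm
    apply Finset.eq_of_subset_of_card_le
    · intro u hu
      rcases mem_insert.mp hu with rfl | hu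
      · exact hxe2
      · rwa [mem_singleton.mp hu]
    · rw [(mem_powersetCard.mp (hS he2)).2, card_insert_of_notMem (by simp [Ne.symm hzx]),
        card_singleton]
  have hsub : S ⊆ ({x, y, z} : Finset ℕ).powersetCard 2 := by
    intro e he
    refine mem_powersetCard.mpr ⟨?_, (mem_powersetCard.mp (hS he)).2⟩
    intro u hu
    by_contra huxyz
    simp only [mem_insert, mem_singleton] at huxyz
    push_neg at huxyz
    obtain ⟨hux, huy, huz⟩ := huxyz
    obtain ⟨a, b, hab, habe⟩ := Finset.card_eq_two.mp (mem_powersetCard.mp (hS he)).2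
    -- u = a or b; let w be the other
    obtain ⟨w, hew⟩ : ∃ w, e = ({u, w} : Finset ℕ) := by
      rcases pair_mem_cases habe hu with rfl | rfl
      · exact ⟨b, habe⟩
      · exact ⟨a, by rw [habe, pair_comm]⟩
    have key : ∀ f ∈ S, ∀ c d : ℕ, f = ({c, d} : Finset ℕ) → c ≠ u → d ≠ u → w = c ∨ w = d := by
      intro f hf c d hfcd hcu hdu
      obtain ⟨v, hv⟩ := hint e he f hf
      rcases mem_inter.mp hv with ⟨hve, hvf⟩
      rcases pair_mem_cases hew hve with rfl | rfl
      · rcases pair_mem_cases hfcd hvf with rfl | rfl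
        · exact absurd rfl hcu
        · exact absurd rfl hdu
      · exact pair_mem_cases hfcd hvf
    have k0 := key e0 he0 x y he0xy (Ne.symm hux) (Ne.symm huy)
    have k1 := key e1 he1 y z he1eq (Ne.symm huy) (Ne.symm huz)
    have k2 := key e2 he2 x z he2eq (Ne.symm hux) (Ne.symm huz)
    rcases k0 with rfl | rfl
    · rcases k1 with h | h
      · exact hxy h
      · exact hzx h.symm
    · rcases k2 with h | h
      · exact hxy h.symm
      · exact hzy h.symm
  calc S.card ≤ (({x, y, z} : Finset ℕ).powersetCard 2).card := card_le_card hsub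
    _ ≤ 3 := by
        rw [card_powersetCard]
        have h3 : ({x, y, z} : Finset ℕ).card = 3 :=
          card_eq_three.mpr ⟨x, y, z, hxy, Ne.symm hzx, Ne.symm hzy, rfl⟩
        rw [h3]
        norm_num
    _ ≤ B.card - 1 := by omega

lemma crossFlip {S T : Finset (Finset ℕ)} (c : ∀ e ∈ S, ∀ f ∈ T, (e ∩ f).Nonempty) :
    ∀ e ∈ T, ∀ f ∈ S, (e ∩ f).Nonempty := by
  intro e he f hf
  rw [inter_comm]
  exact c f hf e he

lemma card_inter_pair {E1 E2 : Finset ℕ} (A : Finset (Finset ℕ)) (hne : E1 ≠ E2) :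
    (A ∩ ({E1, E2} : Finset (Finset ℕ))).card
      = (if E1 ∈ A then 1 else 0) + (if E2 ∈ A then 1 else 0) := by
  rw [inter_comm, ← filter_mem_eq_inter, filter_insert, filter_singleton]
  split_ifs <;> simp [hne]

lemma quad {E1 E2 : Finset ℕ} (A B : Finset (Finset ℕ)) (hne : E1 ≠ E2)
    (h1 : ¬(E1 ∈ A ∧ E2 ∈ B)) (h2 : ¬(E2 ∈ A ∧ E1 ∈ B)) :
    (A ∩ ({E1, E2} : Finset (Finset ℕ))).card
      + (B ∩ ({E1, E2} : Finset (Finset ℕ))).card ≤ 2 := by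
  rw [card_inter_pair A hne, card_inter_pair B hne]
  by_cases hA1 : E1 ∈ A <;> by_cases hA2 : E2 ∈ A <;>
    by_cases hB1 : E1 ∈ B <;> by_cases hB2 : E2 ∈ B <;> simp_all

lemma caseD (B : Finset ℕ) (S1 S2 S3 : Finset (Finset ℕ)) (hm : 5 ≤ B.card)
    (h1 : S1 ⊆ B.powersetCard 2) (h2 : S2 ⊆ B.powersetCard 2) (h3 : S3 ⊆ B.powersetCard 2)
    (c12 : ∀ e ∈ S1, ∀ f ∈ S2, (e ∩ f).Nonempty)
    (c13 : ∀ e ∈ S1, ∀ f ∈ S3, (e ∩ f).Nonempty)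
    (c23 : ∀ e ∈ S2, ∀ f ∈ S3, (e ∩ f).Nonempty)
    (hd : ∃ f1 ∈ S1, ∃ f2 ∈ S1, f1 ∩ f2 = ∅)
    (hne : S2.Nonempty ∨ S3.Nonempty) :
    S1.card + S2.card + S3.card ≤ 3 * (B.card - 1) := by
  obtain ⟨f1, hf1, f2, hf2, hdisj⟩ := hd
  obtain ⟨p, q, hpq, hf1e⟩ := Finset.card_eq_two.mp (mem_powersetCard.mp (h1 hf1)).2
  obtain ⟨r, s, hrs, hf2e⟩ := Finset.card_eq_two.mp (mem_powersetCard.mp (h1 hf2)).2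
  have hdisj' : ∀ u, u ∈ f1 → u ∈ f2 → False := by
    intro u hu1 hu2
    have : u ∈ f1 ∩ f2 := mem_inter.mpr ⟨hu1, hu2⟩
    rw [hdisj] at this
    exact notMem_empty u this
  have hpr : p ≠ r := fun h => hdisj' p (by simp [hf1e]) (by simp [hf2e, h])
  have hps : p ≠ s := fun h => hdisj' p (by simp [hf1e]) (by simp [hf2e, h])
  have hqr : q ≠ r := fun h => hdisj' q (by simp [hf1e]) (by simp [hf2e, h])
  have hqs : q ≠ s := fun h => hdisj' q (by simp [hf1e]) (by simp [hf2e, h])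
  -- any pair meeting both f1 and f2 is one of the four crossing pairs
  have memX : ∀ e : Finset ℕ, e.card = 2 → (e ∩ f1).Nonempty → (e ∩ f2).Nonempty →
      e = {p, r} ∨ e = {p, s} ∨ e = {q, r} ∨ e = {q, s} := by
    intro e hce hn1 hn2
    obtain ⟨u, hu⟩ := hn1
    obtain ⟨v, hv⟩ := hn2
    rcases mem_inter.mp hu with ⟨hue, hu1⟩
    rcases mem_inter.mp hv with ⟨hve, hv2⟩
    have huv : u ≠ v := fun h => hdisj' u hu1 (h ▸ hv2)
    have heuv : e = {u, v} := by
      symm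
      apply Finset.eq_of_subset_of_card_le
      · intro w hw
        rcases mem_insert.mp hw with rfl | hw
        · exact hue
        · rw [mem_singleton.mp hw]; exact hve
      · rw [hce, card_insert_of_notMem (by simp [huv]), card_singleton]
    rcases pair_mem_cases hf1e hu1 with rfl | rfl <;>
      rcases pair_mem_cases hf2e hv2 with rfl | rfl <;> simp [heuv]
  have hX2 : S2 ⊆ ({({p,r} : Finset ℕ), {p,s}} : Finset (Finset ℕ)) ∪ {({q,r} : Finset ℕ), {q,s}} := by
    intro e he
    have := memX e (mem_powersetCard.mp (h2 he)).2
      (by rw [inter_comm]; exact c12 f1 hf1 e he) (by rw [inter_comm]; exact c12 f2 hf2 e he)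
    simp only [mem_union, mem_insert, mem_singleton]
    tauto
  have hX3 : S3 ⊆ ({({p,r} : Finset ℕ), {p,s}} : Finset (Finset ℕ)) ∪ {({q,r} : Finset ℕ), {q,s}} := by
    intro e he
    have := memX e (mem_powersetCard.mp (h3 he)).2
      (by rw [inter_comm]; exact c13 f1 hf1 e he) (by rw [inter_comm]; exact c13 f2 hf2 e he)
    simp only [mem_union, mem_insert, mem_singleton]
    tauto
  -- regroup as complementary pairs D1 = {pr, qs}, D2 = {ps, qr}
  have hXD : ({({p,r} : Finset ℕ), {p,s}} : Finset (Finset ℕ)) ∪ {({q,r} : Finset ℕ), {q,s}}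
      = ({({p,r} : Finset ℕ), {q,s}} : Finset (Finset ℕ)) ∪ {({p,s} : Finset ℕ), {q,r}} := by
    ext e
    simp only [mem_union, mem_insert, mem_singleton]
    tauto
  rw [hXD] at hX2 hX3
  have hprqs : ({p,r} : Finset ℕ) ≠ ({q,s} : Finset ℕ) := by
    intro h
    have : q ∈ ({p,r} : Finset ℕ) := by rw [h]; simp
    simp only [mem_insert, mem_singleton] at this
    rcases this with h' | h'
    · exact hpq h'.symm
    · exact hqr h'
  have hpsqr : ({p,s} : Finset ℕ) ≠ ({q,r} : Finset ℕ) := by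
    intro h
    have : q ∈ ({p,s} : Finset ℕ) := by rw [h]; simp
    simp only [mem_insert, mem_singleton] at this
    rcases this with h' | h'
    · exact hpq h'.symm
    · exact hqs h'
  have disjPair : ∀ e f : Finset ℕ, e = ({p,r} : Finset ℕ) → f = ({q,s} : Finset ℕ) →
      ¬ (e ∩ f).Nonempty := by
    rintro e f rfl rfl ⟨u, hu⟩
    simp only [mem_inter, mem_insert, mem_singleton] at hu
    omega
  have disjPair' : ∀ e f : Finset ℕ, e = ({p,s} : Finset ℕ) → f = ({q,r} : Finset ℕ) →
      ¬ (e ∩ f).Nonempty := by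
    rintro e f rfl rfl ⟨u, hu⟩
    simp only [mem_inter, mem_insert, mem_singleton] at hu
    omega
  have q1 : (S2 ∩ ({({p,r} : Finset ℕ), {q,s}} : Finset (Finset ℕ))).card
      + (S3 ∩ ({({p,r} : Finset ℕ), {q,s}} : Finset (Finset ℕ))).card ≤ 2 := by
    apply quad _ _ hprqs
    · rintro ⟨ha, hb⟩
      exact disjPair _ _ rfl rfl (c23 _ ha _ hb)
    · rintro ⟨ha, hb⟩
      exact disjPair _ _ rfl rfl (by rw [inter_comm]; exact c23 _ ha _ hb)
  have q2 : (S2 ∩ ({({p,s} : Finset ℕ), {q,r}} : Finset (Finset ℕ))).card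
      + (S3 ∩ ({({p,s} : Finset ℕ), {q,r}} : Finset (Finset ℕ))).card ≤ 2 := by
    apply quad _ _ hpsqr
    · rintro ⟨ha, hb⟩
      exact disjPair' _ _ rfl rfl (c23 _ ha _ hb)
    · rintro ⟨ha, hb⟩
      exact disjPair' _ _ rfl rfl (by rw [inter_comm]; exact c23 _ ha _ hb)
  have split : ∀ S : Finset (Finset ℕ),
      S ⊆ ({({p,r} : Finset ℕ), {q,s}} : Finset (Finset ℕ)) ∪ {({p,s} : Finset ℕ), {q,r}} →
      S.card ≤ (S ∩ ({({p,r} : Finset ℕ), {q,s}} : Finset (Finset ℕ))).card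
        + (S ∩ ({({p,s} : Finset ℕ), {q,r}} : Finset (Finset ℕ))).card := by
    intro S hsub
    have : S = (S ∩ ({({p,r} : Finset ℕ), {q,s}} : Finset (Finset ℕ)))
        ∪ (S ∩ ({({p,s} : Finset ℕ), {q,r}} : Finset (Finset ℕ))) := by
      rw [← inter_union_distrib_left]
      exact (inter_eq_left.mpr hsub).symm
    nth_rewrite 1 [this]
    exact card_union_le _ _
  have sum23 : S2.card + S3.card ≤ 4 := by
    have := split S2 hX2
    have := split S3 hX3
    omega
  -- bound S1 by two stars through an element of S2 ∪ S3
  have s1bound : S1.card ≤ 2 * (B.card - 1) := by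
    obtain ⟨e', he', hcr⟩ : ∃ e', e' ∈ B.powersetCard 2 ∧ ∀ e ∈ S1, (e ∩ e').Nonempty := by
      rcases hne with ⟨e', he'⟩ | ⟨e', he'⟩
      · exact ⟨e', h2 he', fun e he => c12 e he e' he'⟩
      · exact ⟨e', h3 he', fun e he => c13 e he e' he'⟩
    obtain ⟨u, v, huv, he'uv⟩ := Finset.card_eq_two.mp (mem_powersetCard.mp he').2
    have hsplit := card_filter_add_card_filter_not (s := S1) (p := fun e => u ∈ e)
    have b1 : (S1.filter (fun e => u ∈ e)).card ≤ B.card - 1 :=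
      star_bound B _ u (fun e he => h1 (mem_filter.mp he).1) (fun e he => (mem_filter.mp he).2)
    have b2 : (S1.filter (fun e => ¬ u ∈ e)).card ≤ B.card - 1 := by
      apply star_bound B _ v (fun e he => h1 (mem_filter.mp he).1)
      intro e he
      rcases mem_filter.mp he with ⟨heS, hue⟩
      obtain ⟨w, hw⟩ := hcr e heS
      rcases mem_inter.mp hw with ⟨hwe, hwe'⟩
      rcases pair_mem_cases he'uv hwe' with rfl | rfl
      · exact absurd hwe hue
      · exact hwe
    omega
  omega

lemma core (B : Finset ℕ) (S1 S2 S3 : Finset (Finset ℕ)) (hm : 5 ≤ B.card)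
    (h1 : S1 ⊆ B.powersetCard 2) (h2 : S2 ⊆ B.powersetCard 2) (h3 : S3 ⊆ B.powersetCard 2)
    (c12 : ∀ e ∈ S1, ∀ f ∈ S2, (e ∩ f).Nonempty)
    (c13 : ∀ e ∈ S1, ∀ f ∈ S3, (e ∩ f).Nonempty)
    (c23 : ∀ e ∈ S2, ∀ f ∈ S3, (e ∩ f).Nonempty)
    (ne1 : S2.Nonempty ∨ S3.Nonempty)
    (ne2 : S1.Nonempty ∨ S3.Nonempty)
    (ne3 : S1.Nonempty ∨ S2.Nonempty) :
    S1.card + S2.card + S3.card ≤ 3 * (B.card - 1) := by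
  by_cases d1 : ∃ f1 ∈ S1, ∃ f2 ∈ S1, f1 ∩ f2 = ∅
  · exact caseD B S1 S2 S3 hm h1 h2 h3 c12 c13 c23 d1 ne1
  by_cases d2 : ∃ f1 ∈ S2, ∃ f2 ∈ S2, f1 ∩ f2 = ∅
  · have := caseD B S2 S1 S3 hm h2 h1 h3 (crossFlip c12) c23 c13 d2 ne2
    omega
  by_cases d3 : ∃ f1 ∈ S3, ∃ f2 ∈ S3, f1 ∩ f2 = ∅
  · have := caseD B S3 S1 S2 hm h3 h1 h2 (crossFlip c13) (crossFlip c23) c12 d3 ne3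
    omega
  push_neg at d1 d2 d3
  have i1 : S1.card ≤ B.card - 1 :=
    intersecting_bound B S1 (by omega) h1 (fun e he f hf =>
      d1 e he f hf)
  have i2 : S2.card ≤ B.card - 1 :=
    intersecting_bound B S2 (by omega) h2 (fun e he f hf =>
      d2 e he f hf)
  have i3 : S3.card ≤ B.card - 1 :=
    intersecting_bound B S3 (by omega) h3 (fun e he f hf =>
      d3 e he f hf)
  omega

lemma mem_minCovers {n t : ℕ} {𝓕 : Finset (Finset ℕ)} {T : Finset ℕ} :
    T ∈ minCovers n t 𝓕 ↔
      T ⊆ Finset.range n ∧ (∀ A ∈ 𝓕, t ≤ (T ∩ A).card) ∧ T.card = tau n t 𝓕 := by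
  classical
  simp [minCovers, Finset.mem_filter, Finset.mem_powerset, and_assoc]

lemma tau_le {n t : ℕ} {𝓕 : Finset (Finset ℕ)} {S : Finset ℕ} (h : IsCover n t 𝓕 S) :
    tau n t 𝓕 ≤ S.card :=
  Nat.sInf_le ⟨S, h, rfl⟩

theorem stmt12 (n k t : ℕ) (ht : 2 ≤ t) (hk : t + 3 ≤ k) (hn : 2 * k < n)
    (𝓕 : Finset (Finset ℕ)) (hmax : MaximalIntersecting n k t 𝓕)
    (htau : tau n t 𝓕 = t + 2)
    (htau2 : tau n t (minCovers n t 𝓕) = t + 1)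
    (U F : Finset ℕ) (hU : U ∈ minCovers n t (minCovers n t 𝓕)) (hF : F ∈ 𝓕)
    (hUF : (U ∩ F).card ≤ t - 2) :
    (minCovers n t 𝓕).card ≤ 3 * (k - t + 1) ∧
      3 * (k - t + 1) < (t + 2) * (k - t) + 1 := by
  classical
  set MC := minCovers n t 𝓕 with hMC
  -- arithmetic second part
  have arith : 3 * (k - t + 1) < (t + 2) * (k - t) + 1 := by
    have h1 : (t + 2) * (k - t) = t * (k - t) + 2 * (k - t) := by ring
    have h2 : 2 * (k - t) ≤ t * (k - t) := Nat.mul_le_mul_right _ ht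
    omega
  refine ⟨?_, arith⟩
  -- basic facts
  obtain ⟨hUsub, hUcov, hUcard⟩ := mem_minCovers.mp hU
  rw [htau2] at hUcard
  obtain ⟨hFsub, hFcard⟩ := mem_powersetCard.mp (hmax.1 hF)
  have hMCfact : ∀ T ∈ MC, T ⊆ Finset.range n ∧ (∀ A ∈ 𝓕, t ≤ (T ∩ A).card) ∧
      T.card = t + 2 := by
    intro T hT
    obtain ⟨h1, h2, h3⟩ := mem_minCovers.mp hT
    exact ⟨h1, h2, htau ▸ h3⟩
  -- MC is nonempty
  have hMCne : MC.Nonempty := by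
    rw [nonempty_iff_ne_empty]
    intro h
    have : tau n t MC ≤ (∅ : Finset ℕ).card :=
      tau_le ⟨empty_subset _, by simp [h]⟩
    rw [card_empty] at this
    omega
  -- structure of minimum covers
  have struct : ∀ T ∈ MC, U ∩ F ⊆ T ∧ T ⊆ U ∪ F ∧ (T ∩ (U \ F)).card = 2 ∧
      (T \ U).card = 2 ∧ (T ∩ (U ∩ F)).card = t - 2 := by
    intro T hT
    obtain ⟨hTsub, hTcov, hTcard⟩ := hMCfact T hT
    have hTU : t ≤ (T ∩ U).card := by
      rw [inter_comm]; exact hUcov T hT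
    have hTF : t ≤ (T ∩ F).card := hTcov F hF
    have hsum := card_union_add_card_inter (T ∩ U) (T ∩ F)
    have hun : ((T ∩ U) ∪ (T ∩ F)).card ≤ t + 2 := by
      rw [← hTcard]
      exact card_le_card (union_subset inter_subset_left inter_subset_left)
    have hieq : (T ∩ U) ∩ (T ∩ F) = T ∩ (U ∩ F) := (inter_inter_distrib_left T U F).symm
    have hin : ((T ∩ U) ∩ (T ∩ F)).card ≤ t - 2 := by
      rw [hieq]
      exact le_trans (card_le_card inter_subset_right) hUF
    have e1 : (T ∩ U).card = t := by omega
    have e2 : (T ∩ F).card = t := by omega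
    have e3 : ((T ∩ U) ∪ (T ∩ F)).card = t + 2 := by omega
    have e4 : (T ∩ (U ∩ F)).card = t - 2 := by rw [← hieq]; omega
    have hTsubUF : T ⊆ U ∪ F := by
      have hd : (T ∩ U) ∪ (T ∩ F) = T ∩ (U ∪ F) := (inter_union_distrib_left T U F).symm
      have : T ∩ (U ∪ F) = T := by
        apply Finset.eq_of_subset_of_card_le inter_subset_left
        rw [← hd, e3, hTcard]
      exact inter_eq_left.mp this
    have hCsubT : U ∩ F ⊆ T := by
      have : T ∩ (U ∩ F) = U ∩ F := by
        apply Finset.eq_of_subset_of_card_le inter_subset_right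
        rw [e4]
        exact hUF
      exact inter_eq_right.mp this
    refine ⟨hCsubT, hTsubUF, ?_, ?_, e4⟩
    · have h5 := card_sdiff_add_card_inter (T ∩ U) F
      have h6 : (T ∩ U) ∩ F = T ∩ (U ∩ F) := inter_assoc T U F
      have h7 : (T ∩ U) \ F = T ∩ (U \ F) := by
        ext x
        simp only [mem_sdiff, mem_inter]
        tauto
      rw [h6, h7, e1, e4] at h5
      omega
    · have h5 := card_sdiff_add_card_inter T U
      rw [hTcard, e1] at h5
      omega
  -- minimum covers pairwise t-intersect
  have pairwise_int : ∀ T1 ∈ MC, ∀ T2 ∈ MC, t ≤ (T1 ∩ T2).card := by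
    intro T1 hT1 T2 hT2
    obtain ⟨hT1sub, hT1cov, hT1card⟩ := hMCfact T1 hT1
    obtain ⟨hT2sub, hT2cov, hT2card⟩ := hMCfact T2 hT2
    have hroom : k - (t + 2) ≤ ((Finset.range n) \ (T1 ∪ T2)).card := by
      have h1 : (T1 ∪ T2).card ≤ 2 * t + 4 := by
        have := card_union_le T1 T2
        omega
      have h2 := card_sdiff_of_subset (union_subset hT1sub hT2sub)
      rw [card_range] at h2
      omega
    obtain ⟨W, hWsub, hWcard⟩ := Finset.exists_subset_card_eq hroom
    have hWT1 : Disjoint T1 W := by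
      rw [disjoint_right]
      intro x hxW hxT1
      have := hWsub hxW
      rw [mem_sdiff, mem_union] at this
      exact this.2 (Or.inl hxT1)
    set K := T1 ∪ W with hK
    have hKcard : K.card = k := by
      rw [hK, card_union_of_disjoint hWT1, hT1card, hWcard]
      omega
    have hKsub : K ⊆ Finset.range n := by
      apply union_subset hT1sub
      intro x hx
      exact (mem_sdiff.mp (hWsub hx)).1
    have hKmem : K ∈ (Finset.range n).powersetCard k := mem_powersetCard.mpr ⟨hKsub, hKcard⟩
    have hKF : K ∈ 𝓕 := by
      have hGsub : insert K 𝓕 ⊆ (Finset.range n).powersetCard k := by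
        intro A hA
        rcases mem_insert.mp hA with rfl | hA
        · exact hKmem
        · exact hmax.1 hA
      have hKint : ∀ A ∈ 𝓕, t ≤ (K ∩ A).card := by
        intro A hA
        calc t ≤ (T1 ∩ A).card := hT1cov A hA
          _ ≤ (K ∩ A).card := card_le_card (inter_subset_inter subset_union_left Subset.rfl)
      have hGint : Intersecting t (insert K 𝓕) := by
        intro A hA B hB
        rcases mem_insert.mp hA with hAK | hA <;> rcases mem_insert.mp hB with hBK | hB
        · rw [hAK, hBK, inter_self, hKcard]; omega
        · rw [hAK]; exact hKint B hB
        · rw [hBK, inter_comm]; exact hKint A hA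
        · exact hmax.2.1 A hA B hB
      have := hmax.2.2 (insert K 𝓕) hGsub hGint (subset_insert _ _)
      rw [← this]
      exact mem_insert_self _ _
    have h1 : t ≤ (T2 ∩ K).card := hT2cov K hKF
    have h2 : T2 ∩ K ⊆ T1 ∩ T2 := by
      intro x hx
      rcases mem_inter.mp hx with ⟨hx2, hxK⟩
      rcases mem_union.mp hxK with hx1 | hxW
      · exact mem_inter.mpr ⟨hx1, hx2⟩
      · exact absurd hx2 ((mem_sdiff.mp (hWsub hxW)).2 ∘ fun h => mem_union.mpr (Or.inr h))
    exact le_trans h1 (card_le_card h2)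
  -- no t-element set covers MC
  have no_t_cover : ∀ S : Finset ℕ, S ⊆ Finset.range n → (∀ T ∈ MC, t ≤ (S ∩ T).card) →
      t + 1 ≤ S.card := by
    intro S hsub hcov
    have : tau n t MC ≤ S.card := tau_le ⟨hsub, hcov⟩
    omega
  -- notation
  obtain ⟨T0, hT0⟩ := hMCne
  have hCcard : (U ∩ F).card = t - 2 := by
    have h := (struct T0 hT0).2.2.2.2
    have hle : (T0 ∩ (U ∩ F)).card ≤ (U ∩ F).card := card_le_card inter_subset_right
    omega
  have hAcard : (U \ F).card = 3 := by
    have := card_sdiff_add_card_inter U F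
    omega
  have hBcard : (F \ U).card = k - t + 2 := by
    have h1 := card_sdiff_add_card_inter F U
    have h2 : F ∩ U = U ∩ F := inter_comm F U
    rw [h2, hCcard, hFcard] at h1
    omega
  have hBsub : F \ U ⊆ Finset.range n := fun x hx => hFsub (mem_sdiff.mp hx).1
  -- fibers of T ↦ T ∩ (U \ F)
  have hfib : ∀ T ∈ MC, T ∩ (U \ F) ∈ (U \ F).powersetCard 2 := by
    intro T hT
    exact mem_powersetCard.mpr ⟨inter_subset_right, (struct T hT).2.2.1⟩
  have hsumfib : MC.card = ∑ P ∈ (U \ F).powersetCard 2,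
      (MC.filter (fun T => T ∩ (U \ F) = P)).card :=
    card_eq_sum_card_fiberwise hfib
  obtain ⟨a, b, c, hab, hac, hbc, hAeq⟩ := Finset.card_eq_three.mp hAcard
  have pne : ∀ (e f : Finset ℕ) (u : ℕ), u ∈ e → u ∉ f → e ≠ f :=
    fun e f u hu1 hu2 h => hu2 (h ▸ hu1)
  have hP12 : ({a, b} : Finset ℕ) ≠ {a, c} :=
    pne _ _ b (by simp) (by simp [Ne.symm hab, hbc])
  have hP13 : ({a, b} : Finset ℕ) ≠ {b, c} :=
    pne _ _ a (by simp) (by simp [hab, hac])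
  have hP23 : ({a, c} : Finset ℕ) ≠ {b, c} :=
    pne _ _ a (by simp) (by simp [hab, hac])
  have hpows : (U \ F).powersetCard 2 = {({a, b} : Finset ℕ), {a, c}, {b, c}} := by
    symm
    apply Finset.eq_of_subset_of_card_le
    · intro P hP
      rw [mem_powersetCard, hAeq]
      simp only [mem_insert, mem_singleton] at hP
      rcases hP with rfl | rfl | rfl
      · constructor
        · intro x hx; simp at hx; rcases hx with rfl | rfl <;> simp
        · rw [card_insert_of_notMem (by simp [hab]), card_singleton]
      · constructor
        · intro x hx; simp at hx; rcases hx with rfl | rfl <;> simp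
        · rw [card_insert_of_notMem (by simp [hac]), card_singleton]
      · constructor
        · intro x hx; simp at hx; rcases hx with rfl | rfl <;> simp
        · rw [card_insert_of_notMem (by simp [hbc]), card_singleton]
    · rw [card_powersetCard, hAcard]
      have : ({({a, b} : Finset ℕ), {a, c}, {b, c}} : Finset (Finset ℕ)).card = 3 := by
        rw [card_insert_of_notMem (by simp [hP12, hP13]),
          card_insert_of_notMem (by simp [hP23]), card_singleton]
      rw [this]
      norm_num
  have hsum3 : MC.card = (MC.filter (fun T => T ∩ (U \ F) = ({a, b} : Finset ℕ))).card
      + (MC.filter (fun T => T ∩ (U \ F) = ({a, c} : Finset ℕ))).card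
      + (MC.filter (fun T => T ∩ (U \ F) = ({b, c} : Finset ℕ))).card := by
    rw [hsumfib, hpows, sum_insert (by simp [hP12, hP13]), sum_insert (by simp [hP23]),
      sum_singleton]
    ring
  -- reconstruction of covers from their parts
  have recon : ∀ S ∈ MC, S = (U ∩ F) ∪ (S ∩ (U \ F)) ∪ (S \ U) := by
    intro S hS
    obtain ⟨hCS, hSUF, -, -, -⟩ := struct S hS
    ext x
    simp only [mem_union, mem_inter, mem_sdiff]
    constructor
    · intro hx
      by_cases hxU : x ∈ U
      · by_cases hxF : x ∈ F
        · exact Or.inl (Or.inl ⟨hxU, hxF⟩)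
        · exact Or.inl (Or.inr ⟨hx, hxU, hxF⟩)
      · exact Or.inr ⟨hx, hxU⟩
    · intro h
      rcases h with (h | h) | h
      · exact hCS (mem_inter.mpr h)
      · exact h.1
      · exact h.1
  have himg : ∀ P, ((MC.filter (fun T => T ∩ (U \ F) = P)).image (fun T => T \ U)).card
      = (MC.filter (fun T => T ∩ (U \ F) = P)).card := by
    intro P
    apply card_image_of_injOn
    intro T hT T' hT' heq
    have heq' : T \ U = T' \ U := heq
    rcases mem_filter.mp hT with ⟨hTmc, hTP⟩
    rcases mem_filter.mp hT' with ⟨hT'mc, hT'P⟩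
    rw [recon T hTmc, recon T' hT'mc, hTP, hT'P, heq']
  -- the image families
  have hSsub : ∀ P, ((MC.filter (fun T => T ∩ (U \ F) = P)).image (fun T => T \ U))
      ⊆ (F \ U).powersetCard 2 := by
    intro P e he
    obtain ⟨T, hT, rfl⟩ := mem_image.mp he
    rcases mem_filter.mp hT with ⟨hTmc, -⟩
    obtain ⟨-, hTUF, -, hTU2, -⟩ := struct T hTmc
    refine mem_powersetCard.mpr ⟨?_, hTU2⟩
    intro x hx
    rcases mem_sdiff.mp hx with ⟨hxT, hxU⟩
    rcases mem_union.mp (hTUF hxT) with h | h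
    · exact absurd h hxU
    · exact mem_sdiff.mpr ⟨h, hxU⟩
  -- cross-intersection between distinct fibers
  have crossgen : ∀ P ∈ (U \ F).powersetCard 2, ∀ P' ∈ (U \ F).powersetCard 2, P ≠ P' →
      ∀ e ∈ (MC.filter (fun T => T ∩ (U \ F) = P)).image (fun T => T \ U),
      ∀ f ∈ (MC.filter (fun T => T ∩ (U \ F) = P')).image (fun T => T \ U),
      (e ∩ f).Nonempty := by
    intro P hPm P' hP'm hPP e he f hf
    obtain ⟨T, hT, rfl⟩ := mem_image.mp he
    obtain ⟨T', hT', rfl⟩ := mem_image.mp hf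
    rcases mem_filter.mp hT with ⟨hTmc, hTP⟩
    rcases mem_filter.mp hT' with ⟨hT'mc, hT'P⟩
    have hsubI : T ∩ T' ⊆ ((U ∩ F) ∪ (P ∩ P')) ∪ ((T \ U) ∩ (T' \ U)) := by
      intro x hx
      rcases mem_inter.mp hx with ⟨hxT, hxT'⟩
      simp only [mem_union, mem_inter, mem_sdiff]
      by_cases hxU : x ∈ U
      · by_cases hxF : x ∈ F
        · exact Or.inl (Or.inl ⟨hxU, hxF⟩)
        · refine Or.inl (Or.inr ⟨?_, ?_⟩)
          · rw [← hTP]; exact mem_inter.mpr ⟨hxT, mem_sdiff.mpr ⟨hxU, hxF⟩⟩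
          · rw [← hT'P]; exact mem_inter.mpr ⟨hxT', mem_sdiff.mpr ⟨hxU, hxF⟩⟩
      · exact Or.inr ⟨⟨hxT, hxU⟩, hxT', hxU⟩
    have hP2 : P.card = 2 := (mem_powersetCard.mp hPm).2
    have hP'2 : P'.card = 2 := (mem_powersetCard.mp hP'm).2
    have hPP1 : (P ∩ P').card ≤ 1 := by
      by_contra hgt
      push_neg at hgt
      have hle : (P ∩ P').card ≤ 2 := hP2 ▸ card_le_card inter_subset_left
      have he1 : P ∩ P' = P := Finset.eq_of_subset_of_card_le inter_subset_left (by omega)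
      have hsub : P ⊆ P' := by rw [← he1]; exact inter_subset_right
      exact hPP (Finset.eq_of_subset_of_card_le hsub (by omega))
    have hti := pairwise_int T hTmc T' hT'mc
    have hc1 : (T ∩ T').card ≤ ((U ∩ F) ∪ (P ∩ P')).card + ((T \ U) ∩ (T' \ U)).card :=
      le_trans (card_le_card hsubI) (card_union_le _ _)
    have hc2 : ((U ∩ F) ∪ (P ∩ P')).card ≤ (U ∩ F).card + (P ∩ P').card := card_union_le _ _
    rw [← card_pos]
    omega
  -- no fiber contains everything
  have hnotall : ∀ P ∈ (U \ F).powersetCard 2, ∃ T ∈ MC, T ∩ (U \ F) ≠ P := by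
    intro P hPm
    by_contra h
    push_neg at h
    obtain ⟨hPsub, hPcard⟩ := mem_powersetCard.mp hPm
    have hdisj : Disjoint (U ∩ F) P := by
      rw [disjoint_left]
      intro x hx hxP
      exact (mem_sdiff.mp (hPsub hxP)).2 (mem_inter.mp hx).2
    have hScard : ((U ∩ F) ∪ P).card = t := by
      rw [card_union_of_disjoint hdisj, hCcard, hPcard]
      omega
    have hSsubn : (U ∩ F) ∪ P ⊆ Finset.range n := by
      apply union_subset (fun x hx => hUsub (mem_inter.mp hx).1)
      exact fun x hx => hUsub (mem_sdiff.mp (hPsub hx)).1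
    have hScov : ∀ T ∈ MC, t ≤ (((U ∩ F) ∪ P) ∩ T).card := by
      intro T hT
      have hsubT : (U ∩ F) ∪ P ⊆ T := by
        apply union_subset (struct T hT).1
        rw [← h T hT]
        exact inter_subset_left
      rw [inter_eq_left.mpr hsubT, hScard]
    have := no_t_cover _ hSsubn hScov
    omega
  -- membership of the three pairs
  have hm1 : ({a, b} : Finset ℕ) ∈ (U \ F).powersetCard 2 := by rw [hpows]; simp
  have hm2 : ({a, c} : Finset ℕ) ∈ (U \ F).powersetCard 2 := by rw [hpows]; simp
  have hm3 : ({b, c} : Finset ℕ) ∈ (U \ F).powersetCard 2 := by rw [hpows]; simp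
  have memfiber : ∀ T ∈ MC, T ∩ (U \ F) = ({a, b} : Finset ℕ) ∨
      T ∩ (U \ F) = ({a, c} : Finset ℕ) ∨ T ∩ (U \ F) = ({b, c} : Finset ℕ) := by
    intro T hT
    have := hfib T hT
    rw [hpows] at this
    simpa using this
  have mkne : ∀ P, (∃ T ∈ MC, T ∩ (U \ F) = P) →
      ((MC.filter (fun T => T ∩ (U \ F) = P)).image (fun T => T \ U)).Nonempty := by
    rintro P ⟨T, hT, hTP⟩
    exact ⟨T \ U, mem_image.mpr ⟨T, mem_filter.mpr ⟨hT, hTP⟩, rfl⟩⟩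
  have ne1 : ((MC.filter (fun T => T ∩ (U \ F) = ({a, c} : Finset ℕ))).image (fun T => T \ U)).Nonempty
      ∨ ((MC.filter (fun T => T ∩ (U \ F) = ({b, c} : Finset ℕ))).image (fun T => T \ U)).Nonempty := by
    obtain ⟨T, hT, hTne⟩ := hnotall _ hm1
    rcases memfiber T hT with h | h | h
    · exact absurd h hTne
    · exact Or.inl (mkne _ ⟨T, hT, h⟩)
    · exact Or.inr (mkne _ ⟨T, hT, h⟩)
  have ne2 : ((MC.filter (fun T => T ∩ (U \ F) = ({a, b} : Finset ℕ))).image (fun T => T \ U)).Nonempty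
      ∨ ((MC.filter (fun T => T ∩ (U \ F) = ({b, c} : Finset ℕ))).image (fun T => T \ U)).Nonempty := by
    obtain ⟨T, hT, hTne⟩ := hnotall _ hm2
    rcases memfiber T hT with h | h | h
    · exact Or.inl (mkne _ ⟨T, hT, h⟩)
    · exact absurd h hTne
    · exact Or.inr (mkne _ ⟨T, hT, h⟩)
  have ne3 : ((MC.filter (fun T => T ∩ (U \ F) = ({a, b} : Finset ℕ))).image (fun T => T \ U)).Nonempty
      ∨ ((MC.filter (fun T => T ∩ (U \ F) = ({a, c} : Finset ℕ))).image (fun T => T \ U)).Nonempty := by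
    obtain ⟨T, hT, hTne⟩ := hnotall _ hm3
    rcases memfiber T hT with h | h | h
    · exact Or.inl (mkne _ ⟨T, hT, h⟩)
    · exact Or.inr (mkne _ ⟨T, hT, h⟩)
    · exact absurd h hTne
  have hfin := core (F \ U)
    ((MC.filter (fun T => T ∩ (U \ F) = ({a, b} : Finset ℕ))).image (fun T => T \ U))
    ((MC.filter (fun T => T ∩ (U \ F) = ({a, c} : Finset ℕ))).image (fun T => T \ U))
    ((MC.filter (fun T => T ∩ (U \ F) = ({b, c} : Finset ℕ))).image (fun T => T \ U))
    (by omega) (hSsub _) (hSsub _) (hSsub _)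
    (crossgen _ hm1 _ hm2 hP12) (crossgen _ hm1 _ hm3 hP13) (crossgen _ hm2 _ hm3 hP23)
    ne1 ne2 ne3
  rw [himg, himg, himg] at hfin
  rw [hsum3]
  omega
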